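/- Let k be a field of characteristic p, let A = C_{p^{r₁}} × ⋯ × C_{p^{r_l}} be an abelian p-group with gᵢ a generator of the i-th cyclic factor, and let Mᵢ = kC_{p^{rᵢ}}/(gᵢ − 1)^{nᵢ} be an indecomposable kC_{p^{rᵢ}}-module of dimension nᵢ (1 ≤ nᵢ ≤ p^{rᵢ}). Then the kA-module M = M₁ ⊗_k ⋯ ⊗_k M_l (with componentwise action) has radical length exactly 1 + (n₁ − 1) + ⋯ + (n_l − 1). -/

import Mathlib

open MonoidAlgebra Pointwise

section
variable (p : ℕ) [Fact p.Prime] (k : Type*) [Field k] [CharP k p] (l : ℕ) (r : Fin l → ℕ)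

abbrev Agrp := Multiplicative (∀ i : Fin l, ZMod (p ^ r i))

noncomputable def gg (i : Fin l) : Agrp p l r :=
  Multiplicative.ofAdd (Pi.single i (1 : ZMod (p ^ r i)))

noncomputable def xx (i : Fin l) : MonoidAlgebra k (Agrp p l r) :=
  single (gg p l r i) (1 : k) - 1

lemma neZeroQ (i : Fin l) : NeZero (p ^ r i) :=
  ⟨pow_ne_zero _ (Nat.Prime.ne_zero Fact.out)⟩

lemma charR : CharP (MonoidAlgebra k (Agrp p l r)) p :=
  charP_of_injective_algebraMap (algebraMap k _).injective p

lemma gg_pow_q (i : Fin l) : (gg p l r i) ^ (p ^ r i) = 1 := by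
  rw [gg, ← ofAdd_nsmul, ← Pi.single_smul]
  simp [nsmul_eq_mul]

lemma xx_pow_q (i : Fin l) : (xx p k l r i) ^ (p ^ r i) = 0 := by
  haveI := charR p k l r
  rw [xx, sub_pow_char_pow, single_pow, gg_pow_q, one_pow, one_pow]
  simp [MonoidAlgebra.one_def]

lemma eq_prod_gg (a : Agrp p l r) :
    a = ∏ i, (gg p l r i) ^ (Multiplicative.toAdd a i).val := by
  haveI := fun i => neZeroQ p l r i
  apply Multiplicative.toAdd.injective
  rw [toAdd_prod]
  simp only [gg, ← ofAdd_nsmul, toAdd_ofAdd, ← Pi.single_smul]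
  have h : ∀ x, ((Multiplicative.toAdd a x).val • (1 : ZMod (p ^ r x))) = Multiplicative.toAdd a x := by
    intro x; haveI := neZeroQ p l r x
    simp [nsmul_eq_mul, ZMod.natCast_val, ZMod.cast_id]
  simp only [h]
  exact (Finset.univ_sum_single (Multiplicative.toAdd a)).symm

lemma single_sub_one_mem (a : Agrp p l r) :
    single a (1 : k) - 1 ∈ Ideal.span (Set.range (xx p k l r)) := by
  set m := Ideal.span (Set.range (xx p k l r)) with hm
  have key : ∀ (s : Finset (Fin l)) (v : Fin l → ℕ),
      single (∏ i ∈ s, (gg p l r i) ^ v i) (1:k) - 1 ∈ m := by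
    intro s v
    induction s using Finset.induction with
    | empty => simp [← MonoidAlgebra.one_def]
    | @insert j s hj ih =>
      rw [Finset.prod_insert hj]
      have h1 : single ((gg p l r j) ^ v j) (1:k) - 1 ∈ m := by
        have hsp : single ((gg p l r j) ^ v j) (1:k) = (single (gg p l r j) (1:k)) ^ v j := by
          rw [single_pow, one_pow]
        rw [hsp]
        obtain ⟨c, hc⟩ := sub_dvd_pow_sub_pow (single (gg p l r j) (1:k)) 1 (v j)
        rw [one_pow] at hc
        rw [hc]
        exact Ideal.mul_mem_right _ _ (Ideal.subset_span ⟨j, rfl⟩)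
      have : single ((gg p l r j) ^ v j * ∏ i ∈ s, (gg p l r i) ^ v i) (1:k) - 1
          = single ((gg p l r j) ^ v j) (1:k) * (single (∏ i ∈ s, (gg p l r i) ^ v i) (1:k) - 1)
            + (single ((gg p l r j) ^ v j) (1:k) - 1) := by
        rw [mul_sub, single_mul_single, mul_one]; ring
      rw [this]
      exact Ideal.add_mem _ (Ideal.mul_mem_left _ _ ih) h1
  have := key Finset.univ (fun i => (Multiplicative.toAdd a i).val)
  rwa [← eq_prod_gg] at this
end

section
variable (p : ℕ) [Fact p.Prime] (k : Type*) [Field k] [CharP k p] (l : ℕ) (r : Fin l → ℕ)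

noncomputable def eps : MonoidAlgebra k (Agrp p l r) →ₐ[k] k :=
  MonoidAlgebra.lift k k (Agrp p l r) 1

lemma eps_apply (f : MonoidAlgebra k (Agrp p l r)) :
    eps p k l r f = ∑ a ∈ f.coeff.support, f.coeff a := by
  rw [eps, MonoidAlgebra.lift_apply]
  simp [Finsupp.sum]

lemma span_eq_ker : Ideal.span (Set.range (xx p k l r)) = RingHom.ker (eps p k l r) := by
  apply le_antisymm
  · rw [Ideal.span_le]
    rintro _ ⟨i, rfl⟩
    simp only [SetLike.mem_coe, RingHom.mem_ker, xx, map_sub, map_one]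
    rw [eps, MonoidAlgebra.lift_single]
    simp
  · intro f hf
    rw [RingHom.mem_ker] at hf
    have hsum : ∑ a ∈ f.coeff.support, f.coeff a = 0 := by rw [← eps_apply]; exact hf
    have hrepr : f = ∑ a ∈ f.coeff.support, f.coeff a • (single a (1:k) - 1) := by
      rw [Finset.sum_congr rfl (fun a _ => smul_sub (f.coeff a) (single a (1:k)) 1),
        Finset.sum_sub_distrib, ← Finset.sum_smul, hsum, zero_smul, sub_zero]
      conv_lhs => rw [← MonoidAlgebra.sum_coeff_single f]
      rw [Finsupp.sum]
      congr 1
      funext a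
      rw [MonoidAlgebra.smul_single', mul_one]
    rw [hrepr]
    exact Ideal.sum_mem _ fun a _ => by
      rw [Algebra.smul_def]
      exact Ideal.mul_mem_left _ _ (single_sub_one_mem p k l r a)

lemma jac_eq : Ideal.jacobson (⊥ : Ideal (MonoidAlgebra k (Agrp p l r)))
    = Ideal.span (Set.range (xx p k l r)) := by
  apply le_antisymm
  · have hmax : (Ideal.span (Set.range (xx p k l r))).IsMaximal := by
      rw [span_eq_ker]
      exact RingHom.ker_isMaximal_of_surjective _ (fun c => ⟨single 1 c, by
        rw [eps, MonoidAlgebra.lift_single]; simp⟩)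
    exact sInf_le ⟨bot_le, hmax⟩
  · rw [Ideal.span_le]
    rintro _ ⟨i, rfl⟩
    apply Ideal.radical_le_jacobson
    rw [show Ideal.radical (⊥ : Ideal (MonoidAlgebra k (Agrp p l r))) = nilradical _ from rfl]
    exact mem_nilradical.2 ⟨p ^ r i, xx_pow_q p k l r i⟩
end

section
variable (p : ℕ) [Fact p.Prime] (k : Type*) [Field k] [CharP k p] (l : ℕ) (r : Fin l → ℕ)

lemma prod_gg_pow (e : Fin l → ℕ) :
    ∏ i, (gg p l r i) ^ e i
      = Multiplicative.ofAdd (fun i => ((e i : ZMod (p ^ r i)))) := by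
  apply Multiplicative.toAdd.injective
  rw [toAdd_prod]
  simp only [gg, ← ofAdd_nsmul, toAdd_ofAdd, ← Pi.single_smul]
  have h : ∀ x, (e x • (1 : ZMod (p ^ r x))) = (e x : ZMod (p ^ r x)) := by
    intro x; simp [nsmul_eq_mul]
  simp only [h]
  exact Finset.univ_sum_single (fun i => ((e i : ZMod (p ^ r i))))

lemma xpow_expand (i : Fin l) :
    (xx p k l r i) ^ (p ^ r i - 1)
      = ∑ m ∈ Finset.range (p ^ r i), single ((gg p l r i) ^ m)
          ((-1 : k) ^ (m + (p ^ r i - 1)) * (Nat.choose (p ^ r i - 1) m : k)) := by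
  have hq : 1 ≤ p ^ r i := Nat.one_le_pow _ _ (Nat.Prime.pos Fact.out)
  rw [xx, sub_pow, Nat.sub_add_cancel hq]
  refine Finset.sum_congr rfl fun m hm => ?_
  have h1 : ((-1 : MonoidAlgebra k (Agrp p l r))) ^ (m + (p ^ r i - 1))
      = single 1 ((-1 : k) ^ (m + (p ^ r i - 1))) := by
    have hneg : (-1 : MonoidAlgebra k (Agrp p l r)) = single (1 : Agrp p l r) (-1 : k) := by
      have : single (1 : Agrp p l r) (-1 : k) = -single (1 : Agrp p l r) (1:k) :=
        MonoidAlgebra.single_neg _ _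
      rw [this, ← MonoidAlgebra.one_def]
    rw [hneg, single_pow, one_pow]
  have h2 : ((Nat.choose (p ^ r i - 1) m : MonoidAlgebra k (Agrp p l r)))
      = single 1 (Nat.choose (p ^ r i - 1) m : k) := by
    rw [← map_natCast (MonoidAlgebra.singleOneRingHom (R := k) (M := Agrp p l r))]
    rfl
  rw [h1, h2, single_pow, one_pow, one_pow, mul_one, single_mul_single,
    single_mul_single]
  simp
end

section
variable (p : ℕ) [Fact p.Prime] (k : Type*) [Field k] [CharP k p] (l : ℕ) (r : Fin l → ℕ)

lemma XX_apply_top :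
    (∏ i, (xx p k l r i) ^ (p ^ r i - 1)).coeff
      (Multiplicative.ofAdd (fun i => ((p ^ r i - 1 : ℕ) : ZMod (p ^ r i)))) = 1 := by
  have hq : ∀ i, 1 ≤ p ^ r i := fun i => Nat.one_le_pow _ _ (Nat.Prime.pos Fact.out)
  set cc : ∀ i : Fin l, ℕ → k :=
    fun i m => (-1 : k) ^ (m + (p ^ r i - 1)) * (Nat.choose (p ^ r i - 1) m : k) with hcc
  have h1 : ∏ i, (xx p k l r i) ^ (p ^ r i - 1)
      = ∑ x : ∀ i : Fin l, Fin (p ^ r i),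
          single (∏ i, (gg p l r i) ^ (x i : ℕ)) (∏ i, cc i (x i)) := by
    have : ∀ i : Fin l, (xx p k l r i) ^ (p ^ r i - 1)
        = ∑ j : Fin (p ^ r i), single ((gg p l r i) ^ (j : ℕ)) (cc i (j : ℕ)) := by
      intro i
      rw [xpow_expand, ← Fin.sum_univ_eq_sum_range]
    rw [Finset.prod_congr rfl (fun i _ => this i), Fintype.prod_sum]
    exact Finset.sum_congr rfl fun x _ => MonoidAlgebra.prod_single _ _ _
  rw [h1, MonoidAlgebra.coeff_sum, Finsupp.finset_sum_apply]
  have hlt : ∀ i, p ^ r i - 1 < p ^ r i := fun i => by have := hq i; omega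
  set x₀ : ∀ i : Fin l, Fin (p ^ r i) := fun i => ⟨p ^ r i - 1, hlt i⟩ with hx₀
  rw [Finset.sum_eq_single x₀]
  · have hcond : (∏ i, (gg p l r i) ^ ((x₀ i : ℕ)))
        = Multiplicative.ofAdd (fun i => ((p ^ r i - 1 : ℕ) : ZMod (p ^ r i))) := by
      rw [prod_gg_pow]
    rw [MonoidAlgebra.coeff_single, Finsupp.single_apply, if_pos hcond]
    refine Finset.prod_eq_one fun i _ => ?_
    show (-1 : k) ^ ((p ^ r i - 1) + (p ^ r i - 1)) * (Nat.choose (p ^ r i - 1) (p ^ r i - 1) : k) = 1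
    rw [Nat.choose_self, Even.neg_one_pow (Even.add_self _), Nat.cast_one, one_mul]
  · intro x _ hx
    rw [MonoidAlgebra.coeff_single, Finsupp.single_apply, if_neg]
    rw [prod_gg_pow]
    intro hcontra
    apply hx
    funext i
    have := congrFun (Multiplicative.ofAdd.injective hcontra) i
    have hval := congrArg ZMod.val this
    rw [ZMod.val_natCast_of_lt (x i).2, ZMod.val_natCast_of_lt (hlt i)] at hval
    exact Fin.ext hval
  · intro h
    exact absurd (Finset.mem_univ x₀) h
end

lemma span_set_pow {R : Type*} [CommRing R] (s : Set R) (n : ℕ) :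
    (Ideal.span s) ^ n = Ideal.span (s ^ n) := by
  induction n with
  | zero => simp [Ideal.one_eq_top, Ideal.span_one]
  | succ n ih => rw [pow_succ, pow_succ, ih, Ideal.span_mul_span']

lemma pow_sum_le_span {R : Type*} [CommRing R] {l : ℕ} (x : Fin l → R) (n : Fin l → ℕ)
    (hn₁ : ∀ i, 1 ≤ n i) :
    (Ideal.span (Set.range x)) ^ ((∑ i, (n i - 1)) + 1)
      ≤ Ideal.span (Set.range fun i => x i ^ n i) := by
  rw [span_set_pow, Ideal.span_le]
  intro a ha
  rw [Set.mem_pow] at ha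
  obtain ⟨f, hf⟩ := ha
  have hc : ∀ j, ∃ i, x i = (f j : R) := fun j => (f j).2
  choose c hc using hc
  have ha' : a = ∏ j, x (c j) := by
    rw [← hf, List.prod_ofFn]
    exact (Finset.prod_congr rfl fun j _ => (hc j)).symm
  -- pigeonhole
  have hcard : ∑ i, (Finset.univ.filter (fun j => c j = i)).card = (∑ i, (n i - 1)) + 1 := by
    rw [← Finset.card_eq_sum_card_fiberwise (fun j _ => Finset.mem_univ (c j))]
    simp
  have hex : ∃ i, n i ≤ (Finset.univ.filter (fun j => c j = i)).card := by
    by_contra hcon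
    push_neg at hcon
    have : ∑ i, (Finset.univ.filter (fun j => c j = i)).card ≤ ∑ i, (n i - 1) :=
      Finset.sum_le_sum fun i _ => by have := hcon i; have := hn₁ i; omega
    omega
  obtain ⟨i, hi⟩ := hex
  have hsplit : a = x i ^ (Finset.univ.filter (fun j => c j = i)).card *
      ∏ j ∈ Finset.univ.filter (fun j => ¬ c j = i), x (c j) := by
    rw [ha', ← Finset.prod_filter_mul_prod_filter_not Finset.univ (fun j => c j = i)]
    congr 1
    rw [Finset.prod_congr rfl (fun j hj => by
      rw [(Finset.mem_filter.1 hj).2]), Finset.prod_const]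
  rw [hsplit, show (Finset.univ.filter (fun j => c j = i)).card
      = n i + ((Finset.univ.filter (fun j => c j = i)).card - n i) by omega, pow_add]
  exact SetLike.mem_coe.2 (Ideal.mul_mem_right _ _ (Ideal.mul_mem_right _ _
    (Ideal.subset_span (Set.mem_range_self i))))

lemma mul_eq_zero_of_mem_span {R : Type*} [CommRing R] {l : ℕ} (x : Fin l → R) (n q : Fin l → ℕ)
    (hq : ∀ i, x i ^ q i = 0) (hn : ∀ i, n i ≤ q i) {z : R}
    (hz : z ∈ Ideal.span (Set.range fun i => x i ^ n i)) :
    z * ∏ i, x i ^ (q i - n i) = 0 := by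
  induction hz using Submodule.span_induction with
  | mem w hw =>
    obtain ⟨i, rfl⟩ := hw
    rw [← Finset.mul_prod_erase Finset.univ _ (Finset.mem_univ i), ← mul_assoc,
      ← pow_add, Nat.add_sub_cancel' (hn i), hq i, zero_mul]
  | zero => rw [zero_mul]
  | add a b _ _ ha hb => rw [add_mul, ha, hb, add_zero]
  | smul r a _ ha => rw [smul_eq_mul, mul_assoc, ha, mul_zero]

set_option maxHeartbeats 1000000 in

/-- Let `A = C_{p^{r₁}} × ⋯ × C_{p^{r_l}}` be an abelian `p`-group over a field `k` of
characteristic `p`, with `gᵢ` a generator of the `i`-th factor, and let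
`M = M₁ ⊗ ⋯ ⊗ M_l ≅ kA / ((g₁-1)^{n₁}, …, (g_l-1)^{n_l})` where `Mᵢ = kC_{p^{rᵢ}}/(gᵢ-1)^{nᵢ}`
is the indecomposable of dimension `nᵢ`.  Then `M` has radical length exactly
`1 + (n₁ - 1) + ⋯ + (n_l - 1)`. -/
theorem radical_length_tensor_of_cyclics (p : ℕ) [Fact p.Prime] (k : Type*) [Field k]
    [CharP k p] (l : ℕ) (r n : Fin l → ℕ) (hr : ∀ i, 1 ≤ r i)
    (hn₁ : ∀ i, 1 ≤ n i) (hn₂ : ∀ i, n i ≤ p ^ r i) :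
    letI A := Multiplicative (∀ i : Fin l, ZMod (p ^ r i))
    letI g : Fin l → A := fun i => Multiplicative.ofAdd (Pi.single i (1 : ZMod (p ^ r i)))
    letI I : Ideal (MonoidAlgebra k A) :=
      Ideal.span (Set.range (fun i => ((single (g i) (1 : k) : MonoidAlgebra k A) - 1) ^ n i))
    letI J := Ideal.jacobson (⊥ : Ideal (MonoidAlgebra k A))
    letI m := ∑ i, (n i - 1)
    (J ^ m) • (⊤ : Submodule (MonoidAlgebra k A) (MonoidAlgebra k A ⧸ I)) ≠ ⊥ ∧
    (J ^ (m + 1)) • (⊤ : Submodule (MonoidAlgebra k A) (MonoidAlgebra k A ⧸ I)) = ⊥ := by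

  have hq1 : ∀ i, 1 ≤ p ^ r i := fun i => Nat.one_le_pow _ _ (Nat.Prime.pos Fact.out)
  show (Ideal.jacobson (⊥ : Ideal (MonoidAlgebra k (Agrp p l r))) ^ (∑ i, (n i - 1))) •
      (⊤ : Submodule (MonoidAlgebra k (Agrp p l r))
        (MonoidAlgebra k (Agrp p l r) ⧸
          Ideal.span (Set.range fun i => (xx p k l r i) ^ n i))) ≠ ⊥ ∧
    (Ideal.jacobson (⊥ : Ideal (MonoidAlgebra k (Agrp p l r))) ^ ((∑ i, (n i - 1)) + 1)) •
      (⊤ : Submodule (MonoidAlgebra k (Agrp p l r))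
        (MonoidAlgebra k (Agrp p l r) ⧸
          Ideal.span (Set.range fun i => (xx p k l r i) ^ n i))) = ⊥
  rw [jac_eq p k l r]
  set I : Ideal (MonoidAlgebra k (Agrp p l r)) :=
    Ideal.span (Set.range fun i => (xx p k l r i) ^ n i) with hI
  set J : Ideal (MonoidAlgebra k (Agrp p l r)) :=
    Ideal.span (Set.range (xx p k l r)) with hJ
  constructor
  · intro hbot
    have hx'J : (∏ i, (xx p k l r i) ^ (n i - 1)) ∈ J ^ (∑ i, (n i - 1)) := by
      rw [hJ, ← Finset.prod_pow_eq_pow_sum]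
      exact Ideal.prod_mem_prod fun i _ => Ideal.pow_mem_pow (Ideal.subset_span (Set.mem_range_self i)) _
    have hmem : (∏ i, (xx p k l r i) ^ (n i - 1)) • (Submodule.Quotient.mk (1 : MonoidAlgebra k (Agrp p l r))
          : MonoidAlgebra k (Agrp p l r) ⧸ I)
        ∈ (J ^ (∑ i, (n i - 1))) • (⊤ : Submodule (MonoidAlgebra k (Agrp p l r))
          (MonoidAlgebra k (Agrp p l r) ⧸ I)) :=
      Submodule.smul_mem_smul hx'J Submodule.mem_top
    rw [hbot, Submodule.mem_bot, ← Submodule.Quotient.mk_smul, smul_eq_mul, mul_one] at hmem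
    have hxI : (∏ i, (xx p k l r i) ^ (n i - 1)) ∈ I := (Submodule.Quotient.mk_eq_zero _).1 hmem
    have h0 : (∏ i, (xx p k l r i) ^ (n i - 1)) * ∏ i, (xx p k l r i) ^ (p ^ r i - n i) = 0 :=
      mul_eq_zero_of_mem_span (xx p k l r) n (fun i => p ^ r i)
        (fun i => xx_pow_q p k l r i) hn₂ hxI
    have hXX : (∏ i, (xx p k l r i) ^ (n i - 1)) * ∏ i, (xx p k l r i) ^ (p ^ r i - n i)
        = ∏ i, (xx p k l r i) ^ (p ^ r i - 1) := by
      rw [← Finset.prod_mul_distrib]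
      refine Finset.prod_congr rfl fun i _ => ?_
      rw [← pow_add]
      congr 1
      have := hn₁ i; have := hn₂ i; omega
    rw [hXX] at h0
    have h1 := XX_apply_top p k l r
    rw [h0] at h1
    simp at h1
  · rw [eq_bot_iff]
    refine Submodule.smul_le.2 fun rr hrr mm _ => ?_
    obtain ⟨z, rfl⟩ := Submodule.Quotient.mk_surjective _ mm
    have hrI : rr ∈ I := by
      rw [hI]
      exact pow_sum_le_span (xx p k l r) n hn₁ hrr
    rw [← Submodule.Quotient.mk_smul, smul_eq_mul]
    rw [Submodule.mem_bot, Submodule.Quotient.mk_eq_zero]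
    exact Ideal.mul_mem_right _ _ hrI
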